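/- For n > 2, there is no consecutive Latin square of order n: no n×n Latin square in which every pair of orthogonally adjacent cells contains values differing by exactly 1. -/
import Mathlib


/-- An `n × n` Latin square with entries in `{1, …, n}`. -/
def latin (n : ℕ) (M : Fin n → Fin n → ℕ) : Prop :=
  (∀ i j, M i j ∈ Finset.Icc 1 n) ∧
  (∀ i, Function.Injective fun j => M i j) ∧
  (∀ j, Function.Injective fun i => M i j)

/-- Two cells are orthogonally adjacent. -/
def orthAdj (n : ℕ) (p q : Fin n × Fin n) : Prop :=
  (p.1 = q.1 ∧ (p.2.val + 1 = q.2.val ∨ q.2.val + 1 = p.2.val)) ∨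
  (p.2 = q.2 ∧ (p.1.val + 1 = q.1.val ∨ q.1.val + 1 = p.1.val))

/-- Two cells are a king's move apart (orthogonally or diagonally adjacent). -/
def kingAdj (n : ℕ) (p q : Fin n × Fin n) : Prop :=
  p ≠ q ∧ ((p.1.val : ℤ) - q.1.val).natAbs ≤ 1 ∧ ((p.2.val : ℤ) - q.2.val).natAbs ≤ 1

/-- Two cells are a knight's move apart. -/
def knightAdj (n : ℕ) (p q : Fin n × Fin n) : Prop :=
  (((p.1.val : ℤ) - q.1.val).natAbs = 1 ∧ ((p.2.val : ℤ) - q.2.val).natAbs = 2) ∨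
  (((p.1.val : ℤ) - q.1.val).natAbs = 2 ∧ ((p.2.val : ℤ) - q.2.val).natAbs = 1)

/-- Two cells are a bishop's move apart: on a common diagonal, at nonzero distance. -/
def bishopMove (n : ℕ) (p q : Fin n × Fin n) : Prop :=
  ((p.1.val : ℤ) - q.1.val).natAbs = ((p.2.val : ℤ) - q.2.val).natAbs ∧ p.1 ≠ q.1

/-- Two cells are orthogonally adjacent on the torus (wrapping around). -/
def torAdj (n : ℕ) (p q : Fin n × Fin n) : Prop :=
  p ≠ q ∧
    ((p.1 = q.1 ∧ ((p.2.val + 1) % n = q.2.val ∨ (q.2.val + 1) % n = p.2.val)) ∨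
     (p.2 = q.2 ∧ ((p.1.val + 1) % n = q.1.val ∨ (q.1.val + 1) % n = p.1.val)))

/-- Two values differ by exactly 1. -/
def diffOne (a b : ℕ) : Prop := ((a : ℤ) - (b : ℤ)).natAbs = 1

lemma rowLin (n : ℕ) (hn : 2 < n) (f : Fin n → ℕ)
    (hb : ∀ j, f j ∈ Finset.Icc 1 n)
    (hinj : Function.Injective f)
    (hstep : ∀ j k : Fin n, j.val + 1 = k.val → diffOne (f j) (f k)) :
    (∀ j : Fin n, (f j : ℤ) = j.val + 1) ∨ (∀ j : Fin n, (f j : ℤ) = (n : ℤ) - j.val) := by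
  have h0 : 0 < n := by omega
  have h1 : 1 < n := by omega
  set s : ℤ := (f ⟨1, h1⟩ : ℤ) - (f ⟨0, h0⟩ : ℤ) with hs
  have hs1 : s = 1 ∨ s = -1 := by
    have := hstep ⟨0,h0⟩ ⟨1,h1⟩ rfl
    unfold diffOne at this
    omega
  have key : ∀ k (hk : k < n), (f ⟨k, hk⟩ : ℤ) = (f ⟨0,h0⟩ : ℤ) + s * k := by
    intro k
    induction k using Nat.strong_induction_on with
    | _ k ih =>
      intro hk
      match k, hk with
      | 0, hk => simp
      | 1, hk => push_cast [hs]; ring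
      | (k+2), hk =>
        have hk1 : k+1 < n := by omega
        have hk0 : k < n := by omega
        have e1 := ih (k+1) (by omega) hk1
        have e0 := ih k (by omega) hk0
        have hd := hstep ⟨k+1,hk1⟩ ⟨k+2,hk⟩ rfl
        unfold diffOne at hd
        have hor : (f ⟨k+2,hk⟩ : ℤ) = (f ⟨k+1,hk1⟩:ℤ) + 1 ∨
            (f ⟨k+2,hk⟩ : ℤ) = (f ⟨k+1,hk1⟩:ℤ) - 1 := by omega
        rcases hor with h | h
        · rcases hs1 with hs' | hs'
          · rw [h, e1, hs']; push_cast; ring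
          · exfalso
            have heq : (f ⟨k+2,hk⟩ : ℤ) = (f ⟨k,hk0⟩ : ℤ) := by
              rw [h, e1, e0, hs']; push_cast; ring
            have := hinj (a₁ := ⟨k+2,hk⟩) (a₂ := ⟨k,hk0⟩) (by exact_mod_cast heq)
            simp [Fin.ext_iff] at this
        · rcases hs1 with hs' | hs'
          · exfalso
            have heq : (f ⟨k+2,hk⟩ : ℤ) = (f ⟨k,hk0⟩ : ℤ) := by
              rw [h, e1, e0, hs']; push_cast; ring
            have := hinj (a₁ := ⟨k+2,hk⟩) (a₂ := ⟨k,hk0⟩) (by exact_mod_cast heq)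
            simp [Fin.ext_iff] at this
          · rw [h, e1, hs']; push_cast; ring
  have hb0 := hb ⟨0,h0⟩
  simp only [Finset.mem_Icc] at hb0
  have hblast := hb ⟨n-1, by omega⟩
  simp only [Finset.mem_Icc] at hblast
  have hlast := key (n-1) (by omega)
  rcases hs1 with hs' | hs'
  · left
    intro j
    have hj := key j.val j.isLt
    rw [hs'] at hj hlast
    have hf0 : (f ⟨0,h0⟩ : ℤ) = 1 := by omega
    rw [hj, hf0]; ring
  · right
    intro j
    have hj := key j.val j.isLt
    rw [hs'] at hj hlast
    have hf0 : (f ⟨0,h0⟩ : ℤ) = n := by omega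
    rw [hj, hf0]; ring

/-- For `n > 2` there is no consecutive Latin square of order `n`. -/
theorem stmt10 (n : ℕ) (hn : 2 < n) :
    ¬ ∃ M : Fin n → Fin n → ℕ, latin n M ∧
      ∀ p q : Fin n × Fin n, orthAdj n p q → diffOne (M p.1 p.2) (M q.1 q.2) := by
  rintro ⟨M, ⟨hb, hrow, hcol⟩, hadj⟩
  have h0 : 0 < n := by omega
  have h1 : 1 < n := by omega
  have rowform : ∀ i : Fin n,
      (∀ j : Fin n, (M i j : ℤ) = j.val + 1) ∨ (∀ j : Fin n, (M i j : ℤ) = (n : ℤ) - j.val) := by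
    intro i
    apply rowLin n hn (M i) (hb i) (hrow i)
    intro j k hjk
    exact hadj (i, j) (i, k) (Or.inl ⟨rfl, Or.inl hjk⟩)
  -- specialize at rows 0 and 1
  have r0 := rowform ⟨0, h0⟩
  have r1 := rowform ⟨1, h1⟩
  have hvadj : diffOne (M ⟨0,h0⟩ ⟨0,h0⟩) (M ⟨1,h1⟩ ⟨0,h0⟩) :=
    hadj (⟨0,h0⟩, ⟨0,h0⟩) (⟨1,h1⟩, ⟨0,h0⟩) (Or.inr ⟨rfl, Or.inl rfl⟩)
  unfold diffOne at hvadj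
  have hne : (⟨0,h0⟩ : Fin n) ≠ ⟨1,h1⟩ := by simp [Fin.ext_iff]
  rcases r0 with r0 | r0 <;> rcases r1 with r1 | r1
  · have e0 := r0 ⟨0,h0⟩
    have e1 := r1 ⟨0,h0⟩
    have : M ⟨0,h0⟩ ⟨0,h0⟩ = M ⟨1,h1⟩ ⟨0,h0⟩ := by exact_mod_cast e0.trans e1.symm
    exact hne (hcol ⟨0,h0⟩ this)
  · have e0 := r0 ⟨0,h0⟩
    have e1 := r1 ⟨0,h0⟩
    simp only [Fin.val_mk, Nat.cast_zero] at e0 e1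
    omega
  · have e0 := r0 ⟨0,h0⟩
    have e1 := r1 ⟨0,h0⟩
    simp only [Fin.val_mk, Nat.cast_zero] at e0 e1
    omega
  · have e0 := r0 ⟨0,h0⟩
    have e1 := r1 ⟨0,h0⟩
    have : M ⟨0,h0⟩ ⟨0,h0⟩ = M ⟨1,h1⟩ ⟨0,h0⟩ := by exact_mod_cast e0.trans e1.symm
    exact hne (hcol ⟨0,h0⟩ this)
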